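/- Among all continuous functions u : [0,1] → ℝ for which there exist functions x₁, x₂ with x₁' = x₂, x₂' = u, x₁(0) = s₀, x₁(1) = s_f, x₂(0) = v₀, x₂(1) = v_f, the affine function u*(t) = λ̄₁t + c with λ̄₁ = −12(s_f − s₀) + 6(v₀ + v_f) and c = 6(s_f − s₀) − 2(2v₀ + v_f) minimizes the energy (1/2)∫₀¹ u(t)² dt. -/

import Mathlib

open intervalIntegral

/-- The affine control u*(t) = λ̄₁ t + c minimizes the energy among all continuous
controls steering the double integrator from (s₀, v₀) to (sf, vf) on [0,1]. -/
theorem affine_control_minimizes_energy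
    (s₀ sf v₀ vf : ℝ)
    (lam c : ℝ)
    (hlam : lam = -12*(sf - s₀) + 6*(v₀ + vf))
    (hc : c = 6*(sf - s₀) - 2*(2*v₀ + vf)) :
    ∀ u : ℝ → ℝ, Continuous u →
      (∃ x₁ x₂ : ℝ → ℝ,
        (∀ t ∈ Set.Icc (0:ℝ) 1, HasDerivAt x₁ (x₂ t) t) ∧
        (∀ t ∈ Set.Icc (0:ℝ) 1, HasDerivAt x₂ (u t) t) ∧
        x₁ 0 = s₀ ∧ x₁ 1 = sf ∧ x₂ 0 = v₀ ∧ x₂ 1 = vf) →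
      (1/2) * (∫ t in (0:ℝ)..1, (lam*t + c)^2) ≤ (1/2) * (∫ t in (0:ℝ)..1, (u t)^2) := by
  rintro u hu ⟨x₁, x₂, hx₁, hx₂, h10, h11, h20, h21⟩
  have huIcc : Set.uIcc (0:ℝ) 1 = Set.Icc (0:ℝ) 1 := Set.uIcc_of_le zero_le_one
  have hcx₂ : ContinuousOn x₂ (Set.Icc (0:ℝ) 1) :=
    fun t ht => (hx₂ t ht).continuousAt.continuousWithinAt
  -- ∫ u = vf - v₀
  have hM0u : ∫ t in (0:ℝ)..1, u t = vf - v₀ := by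
    have := intervalIntegral.integral_eq_sub_of_hasDerivAt
      (f := x₂) (f' := u) (fun t ht => hx₂ t (huIcc ▸ ht)) (hu.intervalIntegrable 0 1)
    rw [this, h21, h20]
  -- ∫ x₂ = sf - s₀
  have hX : ∫ t in (0:ℝ)..1, x₂ t = sf - s₀ := by
    have := intervalIntegral.integral_eq_sub_of_hasDerivAt
      (f := x₁) (f' := x₂) (fun t ht => hx₁ t (huIcc ▸ ht))
      ((hcx₂.mono (by rw [huIcc])).intervalIntegrable)
    rw [this, h11, h10]
  -- ∫ (-1*x₂ + (1-t)u) = -v₀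
  have hint1 : IntervalIntegrable (fun t => -1 * x₂ t + (1-t) * u t) MeasureTheory.volume 0 1 := by
    apply ContinuousOn.intervalIntegrable
    rw [huIcc]
    exact ((continuousOn_const.mul hcx₂).add
      (((continuous_const.sub continuous_id).mul hu).continuousOn))
  have hM : ∫ t in (0:ℝ)..1, (-1 * x₂ t + (1-t) * u t) = -v₀ := by
    have hD : ∀ t ∈ Set.uIcc (0:ℝ) 1,
        HasDerivAt (fun t => (1-t) * x₂ t) (-1 * x₂ t + (1-t) * u t) t := by
      intro t ht
      have h1 : HasDerivAt (fun t : ℝ => 1 - t) (-1) t := by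
        exact (hasDerivAt_id t).const_sub 1
      exact h1.mul (hx₂ t (huIcc ▸ ht))
    have := intervalIntegral.integral_eq_sub_of_hasDerivAt hD hint1
    rw [this]
    simp [h20]
  -- ∫ (1-t)u = (sf - s₀) - v₀
  have hintx₂ : IntervalIntegrable x₂ MeasureTheory.volume 0 1 :=
    (hcx₂.mono (by rw [huIcc])).intervalIntegrable
  have hM1u : ∫ t in (0:ℝ)..1, (1-t) * u t = (sf - s₀) - v₀ := by
    have h1 : ∫ t in (0:ℝ)..1, (1-t) * u t
        = ∫ t in (0:ℝ)..1, ((-1 * x₂ t + (1-t) * u t) + x₂ t) :=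
      intervalIntegral.integral_congr (fun t _ => by ring)
    rw [h1, intervalIntegral.integral_add hint1 hintx₂, hM, hX]
    ring
  have hcaff : Continuous fun t : ℝ => lam*t + c :=
    (continuous_const.mul continuous_id).add continuous_const
  have hc1t : Continuous fun t : ℝ => (1-t)*(lam*t + c) :=
    (continuous_const.sub continuous_id).mul hcaff
  -- moments of the affine control
  have hM0s : ∫ t in (0:ℝ)..1, (lam*t + c) = vf - v₀ := by
    have hF : ∀ t ∈ Set.uIcc (0:ℝ) 1,
        HasDerivAt (fun t => lam*t^2/2 + c*t) (lam*t + c) t := by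
      intro t _
      have h1 : HasDerivAt (fun t : ℝ => lam*t^2/2 + c*t)
          (lam*(2*t^1)/2 + c*1) t :=
        (((hasDerivAt_pow 2 t).const_mul lam).div_const 2).add
          ((hasDerivAt_id t).const_mul c)
      convert h1 using 1; ring
    have := intervalIntegral.integral_eq_sub_of_hasDerivAt hF
      (hcaff.intervalIntegrable 0 1)
    rw [this, hlam, hc]; ring
  have hM1s : ∫ t in (0:ℝ)..1, (1-t) * (lam*t + c) = (sf - s₀) - v₀ := by
    have hF : ∀ t ∈ Set.uIcc (0:ℝ) 1,
        HasDerivAt (fun t => -lam*t^3/3 + (lam - c)*t^2/2 + c*t)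
          ((1-t) * (lam*t + c)) t := by
      intro t _
      have h1 : HasDerivAt (fun t : ℝ => -lam*t^3/3 + (lam - c)*t^2/2 + c*t)
          (-lam*(3*t^2)/3 + (lam - c)*(2*t^1)/2 + c*1) t :=
        ((((hasDerivAt_pow 3 t).const_mul (-lam)).div_const 3).add
          (((hasDerivAt_pow 2 t).const_mul (lam - c)).div_const 2)).add
          ((hasDerivAt_id t).const_mul c)
      convert h1 using 1; ring
    have := intervalIntegral.integral_eq_sub_of_hasDerivAt hF
      (hc1t.intervalIntegrable 0 1)
    rw [this, hlam, hc]; ring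
  -- deviation d = u - u*
  set d : ℝ → ℝ := fun t => u t - (lam*t + c) with hd
  have hcd : Continuous d := hu.sub hcaff
  have hMd0 : ∫ t in (0:ℝ)..1, d t = 0 := by
    rw [hd]
    rw [intervalIntegral.integral_sub (hu.intervalIntegrable 0 1)
      (hcaff.intervalIntegrable 0 1),
      hM0u, hM0s]
    ring
  have hMd1 : ∫ t in (0:ℝ)..1, (1-t) * d t = 0 := by
    have h1 : ∫ t in (0:ℝ)..1, (1-t) * d t
        = ∫ t in (0:ℝ)..1, ((1-t) * u t - (1-t) * (lam*t + c)) :=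
      intervalIntegral.integral_congr (fun t _ => by rw [hd]; ring)
    rw [h1, intervalIntegral.integral_sub
      (((by fun_prop : Continuous fun t : ℝ => (1-t)*u t)).intervalIntegrable 0 1)
      (hc1t.intervalIntegrable 0 1),
      hM1u, hM1s]
    ring
  -- cross term vanishes
  have hcross : ∫ t in (0:ℝ)..1, (lam*t + c) * d t = 0 := by
    have h1 : ∫ t in (0:ℝ)..1, (lam*t + c) * d t
        = ∫ t in (0:ℝ)..1, ((lam + c) * d t - lam * ((1-t) * d t)) :=
      intervalIntegral.integral_congr (fun t _ => by ring)
    rw [h1, intervalIntegral.integral_sub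
      ((show Continuous fun t : ℝ => (lam+c) * d t from continuous_const.mul hcd).intervalIntegrable 0 1)
      (((by fun_prop : Continuous fun t : ℝ => lam * ((1-t) * d t))).intervalIntegrable 0 1),
      intervalIntegral.integral_const_mul, intervalIntegral.integral_const_mul,
      hMd0, hMd1]
    ring
  -- decomposition of energy
  have hdecomp : ∫ t in (0:ℝ)..1, (u t)^2
      = (∫ t in (0:ℝ)..1, (lam*t + c)^2) + 2 * (∫ t in (0:ℝ)..1, (lam*t + c) * d t)
        + ∫ t in (0:ℝ)..1, (d t)^2 := by
    have h1 : ∫ t in (0:ℝ)..1, (u t)^2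
        = ∫ t in (0:ℝ)..1, ((lam*t + c)^2 + (2 * ((lam*t + c) * d t) + (d t)^2)) :=
      intervalIntegral.integral_congr (fun t _ => by rw [hd]; ring)
    rw [h1, intervalIntegral.integral_add
      ((show Continuous fun t : ℝ => (lam*t + c)^2 from hcaff.pow 2).intervalIntegrable 0 1)
      ((show Continuous fun t : ℝ => 2 * ((lam*t + c) * d t) + (d t)^2 from (continuous_const.mul (hcaff.mul hcd)).add
        (hcd.pow 2)).intervalIntegrable 0 1),
      intervalIntegral.integral_add
      ((show Continuous fun t : ℝ => 2 * ((lam*t + c) * d t) from continuous_const.mul (hcaff.mul hcd)).intervalIntegrable 0 1)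
      ((show Continuous fun t : ℝ => (d t)^2 from hcd.pow 2).intervalIntegrable 0 1),
      intervalIntegral.integral_const_mul]
    ring
  have hnn : 0 ≤ ∫ t in (0:ℝ)..1, (d t)^2 :=
    intervalIntegral.integral_nonneg zero_le_one (fun t _ => sq_nonneg _)
  rw [hdecomp, hcross]
  linarith
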